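/- Modulo P-isomorphism, there are only finitely many nice P-labelled trees; moreover, the number of isomorphism classes of nice P-labelled trees of height at most h (for h ≤ |P|) is bounded by nlt(h) defined by nlt(0) = |P| and nlt(h) = |P| · 2^{nlt(h−1)}. -/
import Mathlib


/-- A `P`-labelled tree: a finite node set `N`, an edge relation `E` such that
`(N,E)` is a (rooted, directed) tree, and a `≤`-monotone labelling `λ : N → P`. -/
structure PTree (P : Type) [PartialOrder P] where
  N : Type
  [fin : Fintype N]
  E : N → N → Prop
  label : N → P
  isTree : ∃ r : N, (∀ n, Relation.ReflTransGen E r n) ∧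
      (∀ n, n ≠ r → ∃! m, E m n) ∧ (∀ n, ¬ E n r)
  mono : ∀ i j, E i j → label i ≤ label j

/-- A `P`-embedding of `T` into `T'`. -/
def TreeEmb {P : Type} [PartialOrder P] (T T' : PTree P) (f : T.N → T'.N) : Prop :=
  (∀ i j, T.E i j → Relation.ReflTransGen T'.E (f i) (f j)) ∧
  (∀ k, T.label k = T'.label (f k))

/-- Two `P`-labelled trees are equivalent if each `P`-embeds into the other. -/
def TreeEquiv {P : Type} [PartialOrder P] (T T' : PTree P) : Prop :=
  (∃ f, TreeEmb T T' f) ∧ (∃ g, TreeEmb T' T g)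

/-- A `P`-labelled tree is strict if labels strictly increase along edges. -/
def StrictTree {P : Type} [PartialOrder P] (T : PTree P) : Prop :=
  ∀ i j, T.E i j → T.label i < T.label j

/-- The subtrees of `T` rooted at `i` and at `j` are `P`-isomorphic. -/
def SubIso {P : Type} [PartialOrder P] (T : PTree P) (i j : T.N) : Prop :=
  ∃ g : {n : T.N // Relation.ReflTransGen T.E i n} ≃
        {n : T.N // Relation.ReflTransGen T.E j n},
    (∀ a b, T.E a.1 b.1 ↔ T.E (g a).1 (g b).1) ∧
    (∀ a, T.label a.1 = T.label (g a).1)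

/-- A `P`-isomorphism between labelled trees. -/
def PIso {P : Type} [PartialOrder P] (T T' : PTree P) : Prop :=
  ∃ e : T.N ≃ T'.N, (∀ i j, T.E i j ↔ T'.E (e i) (e j)) ∧
    (∀ k, T.label k = T'.label (e k))

/-- A strict tree is nice if distinct siblings never carry `P`-isomorphic subtrees. -/
def NiceTree {P : Type} [PartialOrder P] (T : PTree P) : Prop :=
  StrictTree T ∧ ∀ i j k : T.N, T.E k i → T.E k j → i ≠ j → ¬ SubIso T i j

/-- The height of `T` is at most `h`: every `E`-path has at most `h` edges. -/
def HeightLE {P : Type} [PartialOrder P] (T : PTree P) (h : ℕ) : Prop :=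
  ∀ (k : ℕ) (c : ℕ → T.N), (∀ a < k, T.E (c a) (c (a + 1))) → k ≤ h

/-- The bound `nlt` on the number of nice trees of bounded height. -/
def nlt (P : Type) [Fintype P] : ℕ → ℕ
  | 0 => Fintype.card P
  | h + 1 => Fintype.card P * 2 ^ nlt P h

namespace Aux
open Relation
attribute [local instance] Classical.propDecidable
attribute [instance] PTree.fin

variable {P : Type} [PartialOrder P]

lemma exists_chain (T : PTree P) {x y : T.N} (h : ReflTransGen T.E x y) :
    ∃ (k : ℕ) (c : ℕ → T.N), c 0 = x ∧ c k = y ∧ ∀ a < k, T.E (c a) (c (a+1)) := by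
  induction h with
  | refl => exact ⟨0, fun _ => x, rfl, rfl, by omega⟩
  | @tail b z hxb e ih =>
    obtain ⟨k, c, h0, hk, he⟩ := ih
    refine ⟨k+1, fun a => if a = k+1 then z else c a, by simpa using h0, by simp, ?_⟩
    intro a ha
    rcases Nat.lt_or_ge a k with h1 | h1
    · simp only [if_neg (by omega : ¬ a = k+1), if_neg (by omega : ¬ a+1 = k+1)]
      exact he a h1
    · have : a = k := by omega
      subst this
      simp only [if_neg (by omega : ¬ a = a+1), if_pos rfl]
      rw [hk]; exact e

noncomputable def dep (T : PTree P) (n : T.N) : ℕ :=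
  Nat.find (p := fun k => ∃ c : ℕ → T.N, c 0 = T.isTree.choose ∧ c k = n ∧
    ∀ a < k, T.E (c a) (c (a+1)))
    (by obtain ⟨k, c, h0, hk, he⟩ := exists_chain T (T.isTree.choose_spec.1 n)
        exact ⟨k, c, h0, hk, he⟩)

lemma dep_spec (T : PTree P) (b : T.N) : ∃ c : ℕ → T.N, c 0 = T.isTree.choose ∧
    c (dep T b) = b ∧ ∀ a < dep T b, T.E (c a) (c (a+1)) :=
  Nat.find_spec (p := fun k => ∃ c : ℕ → T.N, c 0 = T.isTree.choose ∧ c k = b ∧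
    ∀ a < k, T.E (c a) (c (a+1))) _

lemma dep_min (T : PTree P) {b : T.N} {m : ℕ} (h : ∃ c : ℕ → T.N, c 0 = T.isTree.choose ∧
    c m = b ∧ ∀ a < m, T.E (c a) (c (a+1))) : dep T b ≤ m :=
  Nat.find_le h

lemma dep_lt (T : PTree P) {a b : T.N} (h : T.E a b) : dep T a < dep T b := by
  obtain ⟨hr, hu, hno⟩ := T.isTree.choose_spec
  obtain ⟨c, h0, hk, he⟩ := dep_spec T b
  have hk0 : dep T b ≠ 0 := by
    intro h0k
    rw [h0k] at hk
    rw [h0] at hk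
    exact hno a (hk ▸ h)
  obtain ⟨m, hm⟩ := Nat.exists_eq_succ_of_ne_zero hk0
  have hbne : b ≠ T.isTree.choose := by
    intro hb
    exact hno a (hb ▸ h)
  obtain ⟨p, hp, hup⟩ := hu b hbne
  have hcm : T.E (c m) b := by rw [← hk, hm]; exact he m (by omega)
  have hca : c m = a := by rw [hup (c m) hcm, hup a h]
  have : dep T a ≤ m := dep_min T ⟨c, h0, hca, fun x hx => he x (by omega)⟩
  omega

lemma dep_le_rtg (T : PTree P) {a b : T.N} (h : ReflTransGen T.E a b) : dep T a ≤ dep T b := by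
  induction h with
  | refl => exact le_refl _
  | tail _ e ih => exact le_trans ih (le_of_lt (dep_lt T e))

lemma no_cycle (T : PTree P) {a b : T.N} (he : T.E a b) (hr : ReflTransGen T.E b a) : False := by
  have h1 := dep_lt T he
  have h2 := dep_le_rtg T hr
  omega

lemma parent_unique (T : PTree P) {a b n : T.N} (ha : T.E a n) (hb : T.E b n) : a = b := by
  obtain ⟨hr, hu, hno⟩ := T.isTree.choose_spec
  have hne : n ≠ T.isTree.choose := fun h => hno a (h ▸ ha)
  obtain ⟨m, _, hm⟩ := hu n hne
  rw [hm a ha, hm b hb]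

lemma anc_comp (T : PTree P) {n j j₂ : T.N} (h1 : ReflTransGen T.E j n)
    (h2 : ReflTransGen T.E j₂ n) : ReflTransGen T.E j j₂ ∨ ReflTransGen T.E j₂ j := by
  induction h1 generalizing j₂ with
  | refl => exact Or.inr h2
  | tail hjm e ih =>
    rcases h2.cases_tail with h | ⟨m₂, hm₂, e₂⟩
    · subst h; exact Or.inl (hjm.tail e)
    · rw [parent_unique T e₂ e] at hm₂
      exact ih hm₂

lemma branch_unique (T : PTree P) {i j j₂ n : T.N} (e1 : T.E i j) (e2 : T.E i j₂)
    (r1 : ReflTransGen T.E j n) (r2 : ReflTransGen T.E j₂ n) : j = j₂ := by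
  by_contra hne
  rcases anc_comp T r1 r2 with h | h
  · rcases h.cases_tail with h' | ⟨c, hc, ec⟩
    · exact hne h'.symm
    · rw [parent_unique T ec e2] at hc
      exact no_cycle T e1 hc
  · rcases h.cases_tail with h' | ⟨c, hc, ec⟩
    · exact hne h'
    · rw [parent_unique T ec e1] at hc
      exact no_cycle T e2 hc

def Code (P : Type) : ℕ → Type := fun h =>
  Nat.rec P (fun _ ih => P × Finset ih) h

noncomputable instance codeFintype (P : Type) [Fintype P] : ∀ h, Fintype (Code P h)
  | 0 => ‹Fintype P›
  | h + 1 =>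
    letI := codeFintype P h
    (instFintypeProd P (Finset (Code P h)))

lemma card_code (P : Type) [Fintype P] : ∀ h, Fintype.card (Code P h) = nlt P h
  | 0 => rfl
  | h + 1 => by
    show Fintype.card (P × Finset (Code P h)) = _
    rw [Fintype.card_prod, Fintype.card_finset, card_code P h]
    rfl

noncomputable def ch (T : PTree P) (i : T.N) : Finset T.N :=
  Finset.univ.filter (fun j => T.E i j)

lemma mem_ch (T : PTree P) {i j : T.N} : j ∈ ch T i ↔ T.E i j := by
  simp [ch]

noncomputable def codeOf (T : PTree P) : (h : ℕ) → T.N → Code P h := fun h =>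
  Nat.rec (motive := fun h => T.N → Code P h) (fun i => T.label i)
    (fun _ ih i => (T.label i, (ch T i).image ih)) h

lemma codeOf_zero (T : PTree P) (i : T.N) : codeOf T 0 i = T.label i := rfl

lemma codeOf_succ (T : PTree P) (h : ℕ) (i : T.N) :
    codeOf T (h+1) i = ((T.label i, (ch T i).image (codeOf T h)) : Code P (h+1)) := rfl

def DepthLE (T : PTree P) (i : T.N) (h : ℕ) : Prop :=
  ∀ (k : ℕ) (c : ℕ → T.N), c 0 = i → (∀ a < k, T.E (c a) (c (a + 1))) → k ≤ h

lemma depth_child (T : PTree P) {i j : T.N} {h : ℕ} (hd : DepthLE T i (h+1)) (e : T.E i j) :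
    DepthLE T j h := by
  intro k c h0 he
  have := hd (k+1) (fun a => if a = 0 then i else c (a-1)) (if_pos rfl) ?_
  · omega
  · intro a ha
    match a with
    | 0 => simpa [h0] using e
    | t + 1 =>
      simp only [if_neg (by omega : ¬ t+1 = 0), if_neg (by omega : ¬ t+2 = 0)]
      simpa using he t (by omega)

lemma depth_zero_no_child (T : PTree P) {i j : T.N} (hd : DepthLE T i 0) (e : T.E i j) :
    False := by
  have := hd 1 (fun a => if a = 0 then i else j) rfl ?_
  · omega
  · intro a ha
    match a with
    | 0 => simpa using e

structure FlatIso (T T' : PTree P) (i : T.N) (i' : T'.N) (f : T.N → T'.N) : Prop where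
  maps : ∀ n, ReflTransGen T.E i n → ReflTransGen T'.E i' (f n)
  inj : ∀ n₁ n₂, ReflTransGen T.E i n₁ → ReflTransGen T.E i n₂ → f n₁ = f n₂ → n₁ = n₂
  surj : ∀ n', ReflTransGen T'.E i' n' → ∃ n, ReflTransGen T.E i n ∧ f n = n'
  edge : ∀ a b, ReflTransGen T.E i a → ReflTransGen T.E i b → (T.E a b ↔ T'.E (f a) (f b))
  lab : ∀ n, ReflTransGen T.E i n → T.label n = T'.label (f n)
  root : f i = i'

lemma flat_subIso {T : PTree P} {i j : T.N} {f : T.N → T.N} (hf : FlatIso T T i j f) :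
    SubIso T i j := by
  refine ⟨Equiv.ofBijective (fun a => ⟨f a.1, hf.maps a.1 a.2⟩) ⟨?_, ?_⟩, ?_, ?_⟩
  · intro a b hab
    exact Subtype.ext (hf.inj _ _ a.2 b.2 (congrArg Subtype.val hab))
  · intro b
    obtain ⟨n, hn, hfn⟩ := hf.surj b.1 b.2
    exact ⟨⟨n, hn⟩, Subtype.ext hfn⟩
  · intro a b
    exact hf.edge a.1 b.1 a.2 b.2
  · intro a
    exact hf.lab a.1 a.2

lemma flat_pIso {T T' : PTree P} {i : T.N} {i' : T'.N} {f : T.N → T'.N}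
    (hf : FlatIso T T' i i' f) (hall : ∀ n, ReflTransGen T.E i n)
    (hall' : ∀ n', ReflTransGen T'.E i' n') : PIso T T' := by
  refine ⟨Equiv.ofBijective f ⟨?_, ?_⟩, ?_, ?_⟩
  · intro a b hab
    exact hf.inj a b (hall a) (hall b) hab
  · intro b
    obtain ⟨n, _, hfn⟩ := hf.surj b (hall' b)
    exact ⟨n, hfn⟩
  · intro a b
    exact hf.edge a b (hall a) (hall b)
  · intro k
    exact hf.lab k (hall k)

lemma key (h : ℕ) : ∀ (T T' : PTree P), NiceTree T → NiceTree T' → ∀ (i : T.N) (i' : T'.N),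
    DepthLE T i h → DepthLE T' i' h → codeOf T h i = codeOf T' h i' →
    ∃ f : T.N → T'.N, FlatIso T T' i i' f := by
  induction h with
  | zero =>
    intro T T' nT nT' i i' di di' hc
    have desc : ∀ n, ReflTransGen T.E i n → n = i := by
      intro n hn
      rcases hn.cases_head with h | ⟨c, e, _⟩
      · exact h.symm
      · exact (depth_zero_no_child T di e).elim
    have desc' : ∀ n, ReflTransGen T'.E i' n → n = i' := by
      intro n hn
      rcases hn.cases_head with h | ⟨c, e, _⟩
      · exact h.symm
      · exact (depth_zero_no_child T' di' e).elim
    have hlab : T.label i = T'.label i' := hc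
    refine ⟨fun _ => i', ?_, ?_, ?_, ?_, ?_, rfl⟩
    · intro n _; exact ReflTransGen.refl
    · intro n₁ n₂ h1 h2 _; rw [desc n₁ h1, desc n₂ h2]
    · intro n' hn'; exact ⟨i, ReflTransGen.refl, (desc' n' hn').symm⟩
    · intro a b ha hb
      refine iff_of_false (fun e => ?_) (fun e => depth_zero_no_child T' di' e)
      rw [desc a ha] at e
      exact depth_zero_no_child T di e
    · intro n hn; rw [desc n hn]; exact hlab
  | succ h ih =>
    intro T T' nT nT' i i' di di' hc
    have hNT : Nonempty T.N := ⟨i⟩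
    have hNT' : Nonempty T'.N := ⟨i'⟩
    have hc' : ((T.label i, (ch T i).image (codeOf T h)) : P × Finset (Code P h))
        = (T'.label i', (ch T' i').image (codeOf T' h)) := hc
    have hlab : T.label i = T'.label i' := congrArg Prod.fst hc'
    have hset : (ch T i).image (codeOf T h) = (ch T' i').image (codeOf T' h) :=
      congrArg Prod.snd hc'
    have ndesc : ∀ j n, T.E i j → ReflTransGen T.E j n → n ≠ i :=
      fun j n e hr hni => no_cycle T e (hni ▸ hr)
    have ndesc' : ∀ j n, T'.E i' j → ReflTransGen T'.E j n → n ≠ i' :=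
      fun j n e hr hni => no_cycle T' e (hni ▸ hr)
    have codeInj : ∀ j₁ j₂, T.E i j₁ → T.E i j₂ → codeOf T h j₁ = codeOf T h j₂ → j₁ = j₂ := by
      intro j₁ j₂ e₁ e₂ hcd
      by_contra hne
      obtain ⟨f, hf⟩ := ih T T nT nT j₁ j₂ (depth_child T di e₁) (depth_child T di e₂) hcd
      exact nT.2 j₁ j₂ i e₁ e₂ hne (flat_subIso hf)
    have codeInj' : ∀ j₁ j₂, T'.E i' j₁ → T'.E i' j₂ → codeOf T' h j₁ = codeOf T' h j₂ → j₁ = j₂ := by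
      intro j₁ j₂ e₁ e₂ hcd
      by_contra hne
      obtain ⟨f, hf⟩ := ih T' T' nT' nT' j₁ j₂ (depth_child T' di' e₁) (depth_child T' di' e₂) hcd
      exact nT'.2 j₁ j₂ i' e₁ e₂ hne (flat_subIso hf)
    have codemem : ∀ j, T.E i j → ∃ j', T'.E i' j' ∧ codeOf T' h j' = codeOf T h j := by
      intro j e
      have hm : codeOf T h j ∈ (ch T' i').image (codeOf T' h) := by
        rw [← hset]; exact Finset.mem_image_of_mem _ ((mem_ch T).2 e)
      obtain ⟨j', hj', hcd⟩ := Finset.mem_image.1 hm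
      exact ⟨j', (mem_ch T').1 hj', hcd⟩
    have codemem' : ∀ j', T'.E i' j' → ∃ j, T.E i j ∧ codeOf T h j = codeOf T' h j' := by
      intro j' e'
      have hm : codeOf T' h j' ∈ (ch T i).image (codeOf T h) := by
        rw [hset]; exact Finset.mem_image_of_mem _ ((mem_ch T').2 e')
      obtain ⟨j, hj, hcd⟩ := Finset.mem_image.1 hm
      exact ⟨j, (mem_ch T).1 hj, hcd⟩
    choose! β hβ1 hβ2 using codemem
    choose! β' hβ'1 hβ'2 using codemem'
    have ββ' : ∀ j', T'.E i' j' → β (β' j') = j' := by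
      intro j' e'
      apply codeInj' _ _ (hβ1 _ (hβ'1 j' e')) e'
      rw [hβ2 _ (hβ'1 j' e'), hβ'2 j' e']
    have β'β : ∀ j, T.E i j → β' (β j) = j := by
      intro j e
      apply codeInj _ _ (hβ'1 _ (hβ1 j e)) e
      rw [hβ'2 _ (hβ1 j e), hβ2 j e]
    have Fex : ∀ j, T.E i j → ∃ f : T.N → T'.N, FlatIso T T' j (β j) f := by
      intro j e
      exact ih T T' nT nT' j (β j) (depth_child T di e) (depth_child T' di' (hβ1 j e))
        (hβ2 j e).symm
    choose! F hF using Fex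
    have brex : ∀ n, ReflTransGen T.E i n → n ≠ i → ∃ j, T.E i j ∧ ReflTransGen T.E j n := by
      intro n hn hni
      rcases hn.cases_head with h | ⟨j, e, hr⟩
      · exact absurd h.symm hni
      · exact ⟨j, e, hr⟩
    choose! br hbr1 hbr2 using brex
    have brun : ∀ n j, T.E i j → ReflTransGen T.E j n → br n = j := by
      intro n j e hr
      have hni : n ≠ i := ndesc j n e hr
      have hn : ReflTransGen T.E i n := ReflTransGen.head e hr
      exact branch_unique T (hbr1 n hn hni) e (hbr2 n hn hni) hr
    have brex' : ∀ n, ReflTransGen T'.E i' n → n ≠ i' → ∃ j, T'.E i' j ∧ ReflTransGen T'.E j n := by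
      intro n hn hni
      rcases hn.cases_head with h | ⟨j, e, hr⟩
      · exact absurd h.symm hni
      · exact ⟨j, e, hr⟩
    choose! br' hbr'1 hbr'2 using brex'
    have fdesc : ∀ n, ReflTransGen T.E i n → n ≠ i →
        ReflTransGen T'.E (β (br n)) (F (br n) n) :=
      fun n hn hni => (hF (br n) (hbr1 n hn hni)).maps n (hbr2 n hn hni)
    have fne : ∀ n (hn : ReflTransGen T.E i n) (hni : n ≠ i), F (br n) n ≠ i' :=
      fun n hn hni => ndesc' (β (br n)) _ (hβ1 _ (hbr1 n hn hni)) (fdesc n hn hni)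
    refine ⟨fun n => if n = i then i' else F (br n) n, ?_, ?_, ?_, ?_, ?_, if_pos rfl⟩
    · -- maps
      intro n hn
      by_cases hni : n = i
      · rw [if_pos hni]
      · rw [if_neg hni]
        exact ReflTransGen.head (hβ1 _ (hbr1 n hn hni)) (fdesc n hn hni)
    · -- inj
      intro n₁ n₂ h1 h2 heq
      by_cases e1 : n₁ = i <;> by_cases e2 : n₂ = i
      · rw [e1, e2]
      · rw [if_pos e1, if_neg e2] at heq
        exact absurd heq.symm (fne n₂ h2 e2)
      · rw [if_neg e1, if_pos e2] at heq
        exact absurd heq (fne n₁ h1 e1)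
      · rw [if_neg e1, if_neg e2] at heq
        have hm'2 : ReflTransGen T'.E (β (br n₂)) (F (br n₁) n₁) := by
          rw [heq]; exact fdesc n₂ h2 e2
        have hββ : β (br n₁) = β (br n₂) :=
          branch_unique T' (hβ1 _ (hbr1 n₁ h1 e1)) (hβ1 _ (hbr1 n₂ h2 e2))
            (fdesc n₁ h1 e1) hm'2
        have hbrbr : br n₁ = br n₂ := by
          rw [← β'β _ (hbr1 n₁ h1 e1), hββ, β'β _ (hbr1 n₂ h2 e2)]
        have hr2 : ReflTransGen T.E (br n₁) n₂ := by
          rw [hbrbr]; exact hbr2 n₂ h2 e2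
        exact (hF (br n₁) (hbr1 n₁ h1 e1)).inj n₁ n₂ (hbr2 n₁ h1 e1) hr2
          (by rw [heq, hbrbr])
    · -- surj
      intro n' hn'
      by_cases hni' : n' = i'
      · exact ⟨i, ReflTransGen.refl, by rw [if_pos rfl, hni']⟩
      · have e' : T'.E i' (br' n') := hbr'1 n' hn' hni'
        have hr' : ReflTransGen T'.E (br' n') n' := hbr'2 n' hn' hni'
        have ej : T.E i (β' (br' n')) := hβ'1 _ e'
        have hbj : β (β' (br' n')) = br' n' := ββ' _ e'
        have hrr : ReflTransGen T'.E (β (β' (br' n'))) n' := by rw [hbj]; exact hr'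
        obtain ⟨n, hn, hfn⟩ := (hF _ ej).surj n' hrr
        have hni : n ≠ i := ndesc _ n ej hn
        have hbrn : br n = β' (br' n') := brun n _ ej hn
        refine ⟨n, ReflTransGen.head ej hn, ?_⟩
        rw [if_neg hni, hbrn]
        exact hfn
    · -- edge
      intro a b ha hb
      by_cases ea : a = i <;> by_cases eb : b = i
      · rw [if_pos ea, if_pos eb, ea, eb]
        exact iff_of_false (fun e => no_cycle T e ReflTransGen.refl)
          (fun e => no_cycle T' e ReflTransGen.refl)
      · rw [if_pos ea, if_neg eb, ea]
        constructor
        · intro e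
          have hbrb : br b = b := brun b b e ReflTransGen.refl
          rw [hbrb, (hF b e).root]
          exact hβ1 b e
        · intro e'
          have hbd := fdesc b hb eb
          have hne' := fne b hb eb
          have hbb : β (br b) = F (br b) b :=
            branch_unique T' (hβ1 _ (hbr1 b hb eb)) e' hbd ReflTransGen.refl
          have hbeq : b = br b :=
            (hF (br b) (hbr1 b hb eb)).inj b (br b) (hbr2 b hb eb) ReflTransGen.refl
              (by rw [(hF (br b) (hbr1 b hb eb)).root, ← hbb])
          rw [hbeq]
          exact hbr1 b hb eb
      · rw [if_neg ea, if_pos eb, eb]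
        refine iff_of_false (fun e => no_cycle T e ha) (fun e' => no_cycle T' e' ?_)
        exact ReflTransGen.head (hβ1 _ (hbr1 a ha ea)) (fdesc a ha ea)
      · rw [if_neg ea, if_neg eb]
        by_cases hbr : br a = br b
        · have := (hF (br a) (hbr1 a ha ea)).edge a b (hbr2 a ha ea)
            (by rw [hbr]; exact hbr2 b hb eb)
          rw [← hbr]
          exact this
        · refine iff_of_false (fun e => ?_) (fun e' => ?_)
          · exact hbr (brun b (br a) (hbr1 a ha ea) ((hbr2 a ha ea).tail e)).symm
          · have h1 : ReflTransGen T'.E (β (br a)) (F (br b) b) :=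
              (fdesc a ha ea).tail e'
            have hββ : β (br a) = β (br b) :=
              branch_unique T' (hβ1 _ (hbr1 a ha ea)) (hβ1 _ (hbr1 b hb eb)) h1
                (fdesc b hb eb)
            exact hbr (by rw [← β'β _ (hbr1 a ha ea), hββ, β'β _ (hbr1 b hb eb)])
    · -- lab
      intro n hn
      by_cases hni : n = i
      · rw [if_pos hni, hni]; exact hlab
      · rw [if_neg hni]
        exact (hF (br n) (hbr1 n hn hni)).lab n (hbr2 n hn hni)

def onePTree (p : P) : PTree P where
  N := PUnit
  E := fun _ _ => False
  label := fun _ => p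
  isTree := ⟨PUnit.unit, fun n => by cases n; exact ReflTransGen.refl,
    fun n hn => (hn (by cases n; rfl)).elim, fun _ h => h⟩
  mono := fun _ _ h => h.elim

lemma nice_height [Fintype P] (T : PTree P) (hT : NiceTree T) :
    HeightLE T (Fintype.card P) := by
  intro k c he
  have step : ∀ a < k, T.label (c a) < T.label (c (a+1)) := fun a ha => hT.1 _ _ (he a ha)
  have H : ∀ d a, a + d + 1 ≤ k → T.label (c a) < T.label (c (a+d+1)) := by
    intro d
    induction d with
    | zero => intro a ha; exact step a (by omega)
    | succ d ihd =>
      intro a ha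
      exact lt_trans (ihd a (by omega)) (step (a+d+1) (by omega))
  have inj : Function.Injective (fun a : Fin (k+1) => T.label (c a.1)) := by
    intro a b hab
    simp only at hab
    rcases lt_trichotomy a.1 b.1 with hlt | heq | hgt
    · have h1 : a.1 + (b.1 - a.1 - 1) + 1 = b.1 := by omega
      have h2 := H (b.1 - a.1 - 1) a.1 (by omega)
      rw [h1] at h2
      exact absurd hab (ne_of_lt h2)
    · exact Fin.ext heq
    · have h1 : b.1 + (a.1 - b.1 - 1) + 1 = a.1 := by omega
      have h2 := H (a.1 - b.1 - 1) b.1 (by omega)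
      rw [h1] at h2
      exact absurd hab.symm (ne_of_lt h2)
  have hcard := Fintype.card_le_of_injective _ inj
  rw [Fintype.card_fin] at hcard
  omega

lemma part2 [Fintype P] (h : ℕ) :
    ∃ (n : ℕ) (reps : Fin n → PTree P), n ≤ nlt P h ∧
      ∀ T : PTree P, NiceTree T → HeightLE T h → ∃ a, PIso T (reps a) := by
  by_cases hP : Nonempty P
  · obtain ⟨p⟩ := hP
    let eqv : Code P h ≃ Fin (nlt P h) := Fintype.equivFinOfCardEq (card_code P h)
    refine ⟨nlt P h, fun a =>
      if hx : ∃ T : PTree P, NiceTree T ∧ HeightLE T h ∧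
          codeOf T h T.isTree.choose = eqv.symm a then Classical.choose hx else onePTree p,
      le_refl _, ?_⟩
    intro T hT hH
    refine ⟨eqv (codeOf T h T.isTree.choose), ?_⟩
    have hx : ∃ T₀ : PTree P, NiceTree T₀ ∧ HeightLE T₀ h ∧
        codeOf T₀ h T₀.isTree.choose = eqv.symm (eqv (codeOf T h T.isTree.choose)) :=
      ⟨T, hT, hH, by rw [Equiv.symm_apply_apply]⟩
    beta_reduce
    rw [dif_pos hx]
    obtain ⟨hT₀, hH₀, hc₀⟩ := Classical.choose_spec hx
    have hcc : codeOf T h T.isTree.choose =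
        codeOf (Classical.choose hx) h (Classical.choose hx).isTree.choose := by
      rw [hc₀, Equiv.symm_apply_apply]
    obtain ⟨f, hf⟩ := key h T (Classical.choose hx) hT hT₀ _ _
      (fun k c _ he => hH k c he) (fun k c _ he => hH₀ k c he) hcc
    exact flat_pIso hf T.isTree.choose_spec.1 (Classical.choose hx).isTree.choose_spec.1
  · refine ⟨0, Fin.elim0, Nat.zero_le _, ?_⟩
    intro T hT _
    exact absurd ⟨T.label T.isTree.choose⟩ hP

end Aux

/-- modulo `P`-isomorphism there are finitely many nice trees;
moreover for `h ≤ |P|` the number of isomorphism classes of nice trees of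
height at most `h` is bounded by `nlt h`. -/
theorem stmt6 (P : Type) [Fintype P] [PartialOrder P] :
    (∃ (n : ℕ) (reps : Fin n → PTree P),
        ∀ T : PTree P, NiceTree T → ∃ a, PIso T (reps a)) ∧
    (∀ h : ℕ, h ≤ Fintype.card P →
      ∃ (n : ℕ) (reps : Fin n → PTree P), n ≤ nlt P h ∧
        ∀ T : PTree P, NiceTree T → HeightLE T h → ∃ a, PIso T (reps a)) := by
  constructor
  · obtain ⟨n, reps, _, hr⟩ := Aux.part2 (P := P) (Fintype.card P)
    exact ⟨n, reps, fun T hT => hr T hT (Aux.nice_height T hT)⟩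
  · intro h _
    exact Aux.part2 (P := P) h
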